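/- Let A = (Q, Σ, δ, ρ) be an invertible reversible Mealy automaton such that no connected component of A is bireversible (equivalently, since every connected component of an invertible reversible automaton is invertible and reversible, no connected component of A is coreversible). Then every element of the semigroup generated by A has infinite order: for every nonempty word u ∈ Q⁺, the transformations ρ_u, ρ_u², ρ_u³, … of Σ* are pairwise distinct. In particular the generated semigroup ⟨A⟩⁺ is torsion-free. -/
import Mathlib


/-!
Mealy automata: common definitions.

A Mealy automaton on stateset `Q` and alphabet `Γ` is given by transition
functions `δ : Γ → Q → Q` (for each input letter) and output functions
`ρ : Q → Γ → Γ` (for each state); it has a transition `x —i|j→ y` exactly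
when `δ i x = y` and `ρ x i = j`.
-/

/-- Extended output function `ρ_x : Γ* → Γ*` of a single state. -/
def rhoStar {Q Γ : Type*} (δ : Γ → Q → Q) (ρ : Q → Γ → Γ) : Q → List Γ → List Γ
  | _, [] => []
  | x, i :: s => ρ x i :: rhoStar δ ρ (δ i x) s

/-- `ρ_u : Γ* → Γ*` for a word `u = x₁⋯x_n` of states: `ρ_u = ρ_{x_n} ∘ ⋯ ∘ ρ_{x₁}`. -/
def rhoWord {Q Γ : Type*} (δ : Γ → Q → Q) (ρ : Q → Γ → Γ) : List Q → List Γ → List Γ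
  | [], s => s
  | x :: u, s => rhoWord δ ρ u (rhoStar δ ρ x s)

/-- `ρ_u : Γ → Γ` on single letters (the output function of the power automaton). -/
def rhoLetter {Q Γ : Type*} (ρ : Q → Γ → Γ) : List Q → Γ → Γ
  | [], i => i
  | x :: u, i => rhoLetter ρ u (ρ x i)

/-- Extended transition function `δ_i : Q* → Q*` (the transition function of powers). -/
def deltaStar {Q Γ : Type*} (δ : Γ → Q → Q) (ρ : Q → Γ → Γ) : Γ → List Q → List Q
  | _, [] => []
  | i, x :: u => δ i x :: deltaStar δ ρ (ρ x i) u

/-- Sequential application `δ_s = δ_{s_n} ∘ ⋯ ∘ δ_{s₁}` of the letters of a word `s`. -/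
def applyWord {S Γ : Type*} (d : Γ → S → S) : List Γ → S → S
  | [], x => x
  | i :: s, x => applyWord d s (d i x)

/-- The orbit `{δ_s(x) : s ∈ Γ*}` of a state: for reversible automata this is
exactly the (strongly) connected component of `x`. -/
def orbitOf {S Γ : Type*} (d : Γ → S → S) (x : S) : Set S :=
  {y | ∃ s : List Γ, applyWord d s x = y}

/-- An automaton is invertible when every output function is a permutation. -/
def MInvertible {Q Γ : Type*} (ρ : Q → Γ → Γ) : Prop := ∀ x, Function.Bijective (ρ x)

/-- An automaton is reversible when every transition function is a permutation. -/
def MReversible {Q Γ : Type*} (δ : Γ → Q → Q) : Prop := ∀ i, Function.Bijective (δ i)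

/-- Coreversibility: `δ_i(y) = δ_{i'}(z)` and `ρ_y(i) = ρ_z(i')` imply `y = z`. -/
def MCoreversible {Q Γ : Type*} (δ : Γ → Q → Q) (ρ : Q → Γ → Γ) : Prop :=
  ∀ y z : Q, ∀ i i' : Γ, δ i y = δ i' z → ρ y i = ρ z i' → y = z

/-- Bireversible: invertible, reversible and coreversible. -/
def MBireversible {Q Γ : Type*} (δ : Γ → Q → Q) (ρ : Q → Γ → Γ) : Prop :=
  MInvertible ρ ∧ MReversible δ ∧ MCoreversible δ ρ

/-- Connectedness: every state is reachable from every state. -/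
def MConnected {Q Γ : Type*} (δ : Γ → Q → Q) : Prop :=
  ∀ x y : Q, ∃ s : List Γ, applyWord δ s x = y

/-- Invertibility of a component `C` (as an automaton with stateset `C`). -/
def CompInvertible {S Γ : Type*} (r : S → Γ → Γ) (C : Set S) : Prop :=
  ∀ x ∈ C, Function.Bijective (r x)

/-- Reversibility of a component `C`: each transition function permutes `C`. -/
def CompReversible {S Γ : Type*} (d : Γ → S → S) (C : Set S) : Prop :=
  ∀ i : Γ, Set.BijOn (d i) C C

/-- Coreversibility of a component `C` (as an automaton with stateset `C`). -/
def CompCoreversible {S Γ : Type*} (d : Γ → S → S) (r : S → Γ → Γ) (C : Set S) : Prop :=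
  ∀ y ∈ C, ∀ z ∈ C, ∀ i i' : Γ, d i y = d i' z → r y i = r z i' → y = z

/-- Bireversibility of a component `C` (as an automaton with stateset `C`). -/
def CompBireversible {S Γ : Type*} (d : Γ → S → S) (r : S → Γ → Γ) (C : Set S) : Prop :=
  CompInvertible r C ∧ CompReversible d C ∧ CompCoreversible d r C

/-- Transition functions of the product `A × B` of two Mealy automata. -/
def prodD {Q Q' Γ : Type*} (δ : Γ → Q → Q) (ρ : Q → Γ → Γ) (δ' : Γ → Q' → Q') :
    Γ → Q × Q' → Q × Q' :=
  fun i p => (δ i p.1, δ' (ρ p.1 i) p.2)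

/-- Output functions of the product `A × B` of two Mealy automata. -/
def prodR {Q Q' Γ : Type*} (ρ : Q → Γ → Γ) (ρ' : Q' → Γ → Γ) : Q × Q' → Γ → Γ :=
  fun p i => ρ' p.2 (ρ p.1 i)

/-- `u^n`: the `n`-fold concatenation of a word with itself. -/
def wordPow {Q : Type*} (u : List Q) : ℕ → List Q
  | 0 => []
  | n + 1 => u ++ wordPow u n

section AuxMealy

variable {Q Γ : Type*} (δ : Γ → Q → Q) (ρ : Q → Γ → Γ)

lemma applyWord_append {S Γ : Type*} (d : Γ → S → S) (s t : List Γ) (x : S) :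
    applyWord d (s ++ t) x = applyWord d t (applyWord d s x) := by
  induction s generalizing x with
  | nil => rfl
  | cons i s ih => simp [applyWord, ih]

lemma orbit_trans {S Γ : Type*} {d : Γ → S → S} {x y z : S}
    (hy : y ∈ orbitOf d x) (hz : z ∈ orbitOf d y) : z ∈ orbitOf d x := by
  obtain ⟨s, rfl⟩ := hy; obtain ⟨t, rfl⟩ := hz
  exact ⟨s ++ t, applyWord_append d s t x⟩

lemma rhoStar_length (x : Q) (s : List Γ) : (rhoStar δ ρ x s).length = s.length := by
  induction s generalizing x with
  | nil => rfl
  | cons i s ih => simp [rhoStar, ih]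

lemma rhoWord_length (u : List Q) (s : List Γ) : (rhoWord δ ρ u s).length = s.length := by
  induction u generalizing s with
  | nil => rfl
  | cons x u ih => simp [rhoWord, ih, rhoStar_length]

lemma rhoStar_inj (hInv : MInvertible ρ) :
    ∀ (s t : List Γ) (x : Q), rhoStar δ ρ x s = rhoStar δ ρ x t → s = t := by
  intro s
  induction s with
  | nil => intro t x h; cases t with
    | nil => rfl
    | cons j t => simp [rhoStar] at h
  | cons i s ih =>
    intro t x h
    cases t with
    | nil => simp [rhoStar] at h
    | cons j t =>
      simp only [rhoStar, List.cons.injEq] at h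
      obtain ⟨h1, h2⟩ := h
      have hij : i = j := (hInv x).1 h1
      subst hij
      exact congrArg _ (ih t (δ i x) h2)

lemma rhoWord_injective (hInv : MInvertible ρ) (u : List Q) :
    Function.Injective (rhoWord δ ρ u) := by
  induction u with
  | nil => exact fun a b h => h
  | cons x u ih =>
    intro s t h
    exact rhoStar_inj δ ρ hInv s t x (ih h)

lemma rhoWord_surjective [Finite Γ] (hInv : MInvertible ρ) (u : List Q) :
    Function.Surjective (rhoWord δ ρ u) := by
  intro t
  set A : Set (List Γ) := {l | l.length = t.length} with hA
  have hfin : A.Finite := List.finite_length_eq Γ t.length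
  have hmap : Set.MapsTo (rhoWord δ ρ u) A A := fun l hl => by
    simp only [hA, Set.mem_setOf_eq] at *; rw [rhoWord_length]; exact hl
  have hbij := (hfin.injOn_iff_bijOn_of_mapsTo hmap).mp
    ((rhoWord_injective δ ρ hInv u).injOn)
  obtain ⟨s, _, hs⟩ := hbij.surjOn (show t ∈ A from rfl)
  exact ⟨s, hs⟩

lemma rhoWord_append (u v : List Q) (s : List Γ) :
    rhoWord δ ρ (u ++ v) s = rhoWord δ ρ v (rhoWord δ ρ u s) := by
  induction u generalizing s with
  | nil => rfl
  | cons x u ih => simp [rhoWord, ih]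

lemma rhoWord_wordPow (u : List Q) (d : ℕ) (s : List Γ) :
    rhoWord δ ρ (wordPow u d) s = (rhoWord δ ρ u)^[d] s := by
  induction d generalizing s with
  | zero => rfl
  | succ n ih =>
    rw [wordPow, rhoWord_append, ih, ← Function.iterate_succ_apply]

lemma rhoWord_cons (v : List Q) (i : Γ) (s : List Γ) :
    rhoWord δ ρ v (i :: s) = rhoLetter ρ v i :: rhoWord δ ρ (deltaStar δ ρ i v) s := by
  induction v generalizing i s with
  | nil => rfl
  | cons x u ih => simp [rhoWord, rhoStar, deltaStar, rhoLetter, ih]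

lemma rhoWord_nil (u : List Q) : rhoWord δ ρ u ([] : List Γ) = [] := by
  induction u with
  | nil => rfl
  | cons x u ih => simpa [rhoWord, rhoStar] using ih

lemma idw_letter {v : List Q} (h : ∀ s, rhoWord δ ρ v s = s) (i : Γ) :
    rhoLetter ρ v i = i := by
  have := h [i]
  rw [rhoWord_cons, rhoWord_nil] at this
  exact (List.cons.injEq _ _ _ _ ▸ this).1

lemma idw_deltaStar {v : List Q} (h : ∀ s, rhoWord δ ρ v s = s) (i : Γ) :
    ∀ s, rhoWord δ ρ (deltaStar δ ρ i v) s = s := by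
  intro s
  have := h (i :: s)
  rw [rhoWord_cons] at this
  exact (List.cons.injEq _ _ _ _ ▸ this).2

lemma idw_applyWord : ∀ (s : List Γ) (v : List Q), (∀ t, rhoWord δ ρ v t = t) →
    ∀ t, rhoWord δ ρ (applyWord (deltaStar δ ρ) s v) t = t := by
  intro s
  induction s with
  | nil => intro v h; exact h
  | cons i s ih => intro v h; exact ih _ (idw_deltaStar δ ρ h i)

lemma deltaStar_length (i : Γ) (v : List Q) : (deltaStar δ ρ i v).length = v.length := by
  induction v generalizing i with
  | nil => rfl
  | cons x u ih => simp [deltaStar, ih]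

lemma deltaStar_inj (hRev : MReversible δ) :
    ∀ (v v' : List Q) (i : Γ), deltaStar δ ρ i v = deltaStar δ ρ i v' → v = v' := by
  intro v
  induction v with
  | nil => intro v' i h; cases v' with
    | nil => rfl
    | cons y u => simp [deltaStar] at h
  | cons x u ih =>
    intro v' i h
    cases v' with
    | nil => simp [deltaStar] at h
    | cons y u' =>
      simp only [deltaStar, List.cons.injEq] at h
      obtain ⟨h1, h2⟩ := h
      have hxy : x = y := (hRev i).1 h1
      subst hxy
      exact congrArg _ (ih u' (ρ x i) h2)

lemma rhoLetter_bijective (hInv : MInvertible ρ) (v : List Q) :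
    Function.Bijective (rhoLetter ρ v) := by
  induction v with
  | nil => exact Function.bijective_id
  | cons x u ih =>
    have : rhoLetter ρ (x :: u) = (rhoLetter ρ u) ∘ (ρ x) := funext fun i => rfl
    rw [this]
    exact ih.comp (hInv x)

lemma deltaStar_concat (i : Γ) (v : List Q) (y : Q) :
    deltaStar δ ρ i (v ++ [y]) = deltaStar δ ρ i v ++ [δ (rhoLetter ρ v i) y] := by
  induction v generalizing i with
  | nil => rfl
  | cons x u ih => simp [deltaStar, rhoLetter, ih]

lemma rhoLetter_concat (v : List Q) (y : Q) (i : Γ) :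
    rhoLetter ρ (v ++ [y]) i = ρ y (rhoLetter ρ v i) := by
  induction v generalizing i with
  | nil => rfl
  | cons x u ih => simp [rhoLetter, ih]

lemma reach_last (hInv : MInvertible ρ) :
    ∀ (s' : List Γ) (v : List Q) (y : Q),
    ∃ (s : List Γ) (v' : List Q),
      applyWord (deltaStar δ ρ) s (v ++ [y]) = v' ++ [applyWord δ s' y] := by
  intro s'
  induction s' with
  | nil => exact fun v y => ⟨[], v, rfl⟩
  | cons j s' ih =>
    intro v y
    obtain ⟨i, hi⟩ := (rhoLetter_bijective ρ hInv v).2 j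
    obtain ⟨s, v', h⟩ := ih (deltaStar δ ρ i v) (δ j y)
    refine ⟨i :: s, v', ?_⟩
    show applyWord (deltaStar δ ρ) s (deltaStar δ ρ i (v ++ [y])) = _
    rw [deltaStar_concat, hi, h]
    rfl

lemma last_mem_orbit :
    ∀ (s : List Γ) (v : List Q) (y : Q),
    ∃ (v' : List Q) (y' : Q),
      applyWord (deltaStar δ ρ) s (v ++ [y]) = v' ++ [y'] ∧ y' ∈ orbitOf δ y := by
  intro s
  induction s with
  | nil => exact fun v y => ⟨v, y, rfl, ⟨[], rfl⟩⟩
  | cons i s ih =>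
    intro v y
    obtain ⟨v', y', h, hy'⟩ := ih (deltaStar δ ρ i v) (δ (rhoLetter ρ v i) y)
    refine ⟨v', y', ?_, orbit_trans (⟨[rhoLetter ρ v i], rfl⟩ : δ (rhoLetter ρ v i) y ∈ orbitOf δ y) hy'⟩
    show applyWord (deltaStar δ ρ) s (deltaStar δ ρ i (v ++ [y])) = _
    rw [deltaStar_concat, h]

lemma applyWord_deltaStar_length (s : List Γ) (v : List Q) :
    (applyWord (deltaStar δ ρ) s v).length = v.length := by
  induction s generalizing v with
  | nil => rfl
  | cons i s ih => simp [applyWord, ih, deltaStar_length]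

lemma exists_preimage_orbit [Finite Q] (hRev : MReversible δ) (w : List Q) (j : Γ) :
    ∀ v' ∈ orbitOf (deltaStar δ ρ) w, ∃ v ∈ orbitOf (deltaStar δ ρ) w, deltaStar δ ρ j v = v' := by
  set W := orbitOf (deltaStar δ ρ) w with hW
  have hmap : Set.MapsTo (deltaStar δ ρ j) W W := by
    intro v hv
    exact orbit_trans hv ⟨[j], rfl⟩
  have hsub : W ⊆ {l : List Q | l.length = w.length} := by
    rintro v ⟨s, rfl⟩
    exact applyWord_deltaStar_length δ ρ s w
  have hfin : W.Finite := (List.finite_length_eq Q w.length).subset hsub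
  have hbij := (hfin.injOn_iff_bijOn_of_mapsTo hmap).mp
    (fun a _ b _ h => deltaStar_inj δ ρ hRev a b j h)
  intro v' hv'
  obtain ⟨v, hv, h⟩ := hbij.surjOn hv'
  exact ⟨v, hv, h⟩

end AuxMealy

/-- An invertible reversible Mealy automaton none of whose
connected components is bireversible generates a torsion-free semigroup:
for every nonempty word `u` of states, the positive powers of `ρ_u` are
pairwise distinct. -/
theorem torsionFree_of_no_bireversible_component
    {Q Γ : Type*} [Fintype Q] [Fintype Γ] [Nonempty Q] [Nonempty Γ]
    (δ : Γ → Q → Q) (ρ : Q → Γ → Γ)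
    (hInv : MInvertible ρ) (hRev : MReversible δ)
    (hNoBir : ∀ x : Q, ¬ CompBireversible δ ρ (orbitOf δ x)) :
    ∀ u : List Q, u ≠ [] → ∀ p q : ℕ,
      (rhoWord δ ρ u)^[p + 1] = (rhoWord δ ρ u)^[q + 1] → p = q := by
  have key : ∀ w : List Q, w ≠ [] → ¬ (∀ s, rhoWord δ ρ w s = s) := by
    intro w hw hid
    obtain ⟨w₀, b, rfl⟩ : ∃ w₀ b, w = w₀ ++ [b] := by
      rcases List.eq_nil_or_concat w with h | ⟨w₀, b, h⟩
      · exact absurd h hw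
      · exact ⟨w₀, b, by simpa [List.concat_eq_append] using h⟩
    refine hNoBir b ⟨fun y _ => hInv y, ?_, ?_⟩
    · intro i
      have hmap : Set.MapsTo (δ i) (orbitOf δ b) (orbitOf δ b) :=
        fun y hy => orbit_trans hy ⟨[i], rfl⟩
      exact ((Set.toFinite _).injOn_iff_bijOn_of_mapsTo hmap).mp (hRev i).injective.injOn
    · intro y hy z hz i i' h1 h2
      set S : Set (Q × Γ) := (orbitOf δ b) ×ˢ (Set.univ : Set Γ) with hS
      set g : Q × Γ → Q × Γ := fun p => (δ p.2 p.1, ρ p.1 p.2) with hg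
      have hmap : Set.MapsTo g S S := by
        rintro ⟨a, i0⟩ ⟨ha, -⟩
        exact ⟨orbit_trans ha ⟨[i0], rfl⟩, trivial⟩
      have hsurj : Set.SurjOn g S S := by
        rintro ⟨t, j⟩ ⟨ht, -⟩
        obtain ⟨s', rfl⟩ := ht
        obtain ⟨s, v', hv'⟩ := reach_last δ ρ hInv s' w₀ b
        obtain ⟨v, hvW, hdv⟩ :=
          exists_preimage_orbit δ ρ hRev (w₀ ++ [b]) j _ ⟨s, hv'⟩
        obtain ⟨s₂, hs₂⟩ := hvW
        obtain ⟨v₁, y₀, hdec, hy₀⟩ := last_mem_orbit δ ρ s₂ w₀ b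
        rw [hs₂] at hdec
        have hPv : ∀ t, rhoWord δ ρ v t = t := by
          rw [← hs₂]; exact idw_applyWord δ ρ s₂ _ hid
        subst hdec
        rw [deltaStar_concat] at hdv
        have hlast : δ (rhoLetter ρ v₁ j) y₀ = applyWord δ s' b := by
          have := congrArg (fun l => l.getLast?) hdv
          simpa using this
        have hout : ρ y₀ (rhoLetter ρ v₁ j) = j := by
          have h1 := idw_letter δ ρ hPv j
          rwa [rhoLetter_concat] at h1
        refine ⟨(y₀, rhoLetter ρ v₁ j), Set.mem_prod.mpr ⟨hy₀, trivial⟩, ?_⟩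
        exact Prod.ext hlast hout
      have hfin : S.Finite := S.toFinite
      have hinj := ((hfin.surjOn_iff_bijOn_of_mapsTo hmap).mp hsurj).injOn
      have hmem1 : (y, i) ∈ S := Set.mem_prod.mpr ⟨hy, trivial⟩
      have hmem2 : (z, i') ∈ S := Set.mem_prod.mpr ⟨hz, trivial⟩
      have := hinj hmem1 hmem2 (Prod.ext h1 h2)
      exact congrArg Prod.fst this
  intro u hu p q hpq
  by_contra hne
  have hbij : Function.Bijective (rhoWord δ ρ u) :=
    ⟨rhoWord_injective δ ρ hInv u, rhoWord_surjective δ ρ hInv u⟩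
  have main : ∀ p q : ℕ, p < q →
      (rhoWord δ ρ u)^[p+1] = (rhoWord δ ρ u)^[q+1] → False := by
    intro p q hlt heq
    set f := rhoWord δ ρ u with hf
    set d := q - p with hd
    have hd0 : 0 < d := Nat.sub_pos_of_lt hlt
    have hdq : d + (p+1) = q+1 := by omega
    have heq2 : f^[p+1] = f^[d] ∘ f^[p+1] := by
      calc f^[p+1] = f^[q+1] := heq
        _ = f^[d] ∘ f^[p+1] := by rw [← hdq, Function.iterate_add]
    have hidd : ∀ b, f^[d] b = b := by
      intro b
      obtain ⟨a, ha⟩ := (hbij.surjective.iterate (p+1)) b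
      have h3 := congrFun heq2 a
      simp only [Function.comp_apply] at h3
      rw [ha] at h3
      exact h3.symm
    have hidw : ∀ s, rhoWord δ ρ (wordPow u d) s = s := by
      intro s; rw [rhoWord_wordPow]; exact hidd s
    have hne' : wordPow u d ≠ [] := by
      obtain ⟨e, he⟩ := Nat.exists_eq_succ_of_ne_zero (by omega : d ≠ 0)
      rw [he]; simp [wordPow, hu]
    exact key _ hne' hidw
  rcases Nat.lt_or_ge p q with h | h
  · exact main p q h hpq
  · rcases Nat.lt_or_ge q p with h2 | h2
    · exact main q p h2 hpq.symm
    · exact hne (le_antisymm h2 h)
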